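/- The continuous spectrum of B on c₀ equals the boundary set {λ ∈ ℂ : (|λ - r₁|⋯|λ - r_l|)^{1/l} = (|s₁|⋯|s_{l'}|)^{1/l'}}. -/

import Mathlib

set_option maxHeartbeats 1000000

open Filter Topology

noncomputable abbrev Complex.abs : AbsoluteValue ℂ ℝ := NormedField.toAbsoluteValue ℂ

lemma Complex.norm_eq_abs (z : ℂ) : ‖z‖ = Complex.abs z := rfl

lemma Complex.abs_natCast (n : ℕ) : Complex.abs (n : ℂ) = n := by
  rw [← Complex.norm_eq_abs]; simp

namespace Stmt9Aux

open Finset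

lemma per_mod {f : ℕ → ℝ} {L : ℕ} (hL : 0 < L) (hper : ∀ k, f (k + L) = f k) (k : ℕ) :
    f k = f (k % L) := by
  induction k using Nat.strong_induction_on with
  | _ k ih =>
    rcases lt_or_ge k L with h | h
    · rw [Nat.mod_eq_of_lt h]
    · have h1 : k - L + L = k := Nat.sub_add_cancel h
      have h2 := hper (k - L)
      rw [h1] at h2
      rw [h2, ih (k - L) (by omega), Nat.mod_eq_sub_mod h]

lemma per_shift_block {f : ℕ → ℝ} {L : ℕ} (hL : 0 < L) (hper : ∀ k, f (k + L) = f k) (k : ℕ) :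
    ∏ j ∈ range L, f (k + j) = ∏ j ∈ range L, f j := by
  induction k with
  | zero => simp
  | succ k ih =>
    obtain ⟨m, rfl⟩ : ∃ m, L = m + 1 := ⟨L - 1, by omega⟩
    rw [← ih, Finset.prod_range_succ, Finset.prod_range_succ' (fun j => f (k + j)) m]
    have h1 : ∀ j, k + 1 + j = k + (j + 1) := fun j => by ring
    simp only [h1]
    rw [show k + (m + 1) = k + m + 1 from rfl]
    have h2 : f (k + (m + 1)) = f k := hper k
    rw [show k + (m + 1) = k + m + 1 from rfl] at h2
    rw [h2, add_zero]

lemma per_block_pow {f : ℕ → ℝ} {L : ℕ} (hL : 0 < L) (hper : ∀ k, f (k + L) = f k) (k c : ℕ) :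
    ∏ j ∈ range (c * L), f (k + j) = (∏ j ∈ range L, f j) ^ c := by
  induction c with
  | zero => simp
  | succ c ih =>
    rw [show (c + 1) * L = c * L + L from by ring, Finset.prod_range_add, ih, pow_succ]
    congr 1
    have := per_shift_block hL hper (k + c * L)
    simp only [add_assoc] at this ⊢
    exact this

lemma per_window_up {f : ℕ → ℝ} {L : ℕ} (hL : 0 < L) (hper : ∀ k, f (k + L) = f k)
    (hf0 : ∀ k, 0 ≤ f k) {Mx : ℝ} (hMx : ∀ k, f k ≤ Mx) (h1 : 1 ≤ Mx)
    (k t u : ℕ) (hu1 : u * L ≤ t) (hu2 : t ≤ u * L + L) :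
    ∏ j ∈ range t, f (k + j) ≤ (∏ j ∈ range L, f j) ^ u * Mx ^ L := by
  have hQ0 : (0:ℝ) ≤ (∏ j ∈ range L, f j) ^ u :=
    pow_nonneg (Finset.prod_nonneg fun j _ => hf0 j) u
  have hsplit : t = u * L + (t - u * L) := by omega
  rw [hsplit, Finset.prod_range_add, per_block_pow hL hper k u]
  apply mul_le_mul_of_nonneg_left _ hQ0
  calc ∏ j ∈ range (t - u * L), f (k + (u * L + j))
      ≤ ∏ j ∈ range (t - u * L), Mx := Finset.prod_le_prod (fun j _ => hf0 _) (fun j _ => hMx _)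
    _ = Mx ^ (t - u * L) := by rw [Finset.prod_const, Finset.card_range]
    _ ≤ Mx ^ L := pow_le_pow_right₀ h1 (by omega)

lemma per_window_lo {f : ℕ → ℝ} {L : ℕ} (hL : 0 < L) (hper : ∀ k, f (k + L) = f k)
    {mn : ℝ} (hmn : ∀ k, mn ≤ f k) (h0 : 0 < mn) (h1 : mn ≤ 1)
    (k t u : ℕ) (hu1 : u * L ≤ t) (hu2 : t ≤ u * L + L) :
    (∏ j ∈ range L, f j) ^ u * mn ^ L ≤ ∏ j ∈ range t, f (k + j) := by
  have hQ0 : (0:ℝ) ≤ (∏ j ∈ range L, f j) ^ u :=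
    pow_nonneg (Finset.prod_nonneg fun j _ => (h0.trans_le (hmn j)).le) u
  have hsplit : t = u * L + (t - u * L) := by omega
  rw [hsplit, Finset.prod_range_add, per_block_pow hL hper k u]
  apply mul_le_mul_of_nonneg_left _ hQ0
  calc mn ^ L ≤ mn ^ (t - u * L) := pow_le_pow_of_le_one h0.le h1 (by omega)
    _ = ∏ j ∈ range (t - u * L), mn := by rw [Finset.prod_const, Finset.card_range]
    _ ≤ ∏ j ∈ range (t - u * L), f (k + (u * L + j)) :=
        Finset.prod_le_prod (fun j _ => h0.le) (fun j _ => hmn _)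

lemma sum_pow_div_le {θ : ℝ} {L : ℕ} (h0 : 0 ≤ θ) (h1 : θ < 1) (hL : 0 < L) (n : ℕ) :
    ∑ t ∈ range n, θ ^ (t / L) ≤ L / (1 - θ) := by
  have h1' : (0:ℝ) < 1 - θ := by linarith
  have key : ∀ K, ∑ t ∈ range (K * L), θ ^ (t / L) = (∑ u ∈ range K, θ ^ u) * L := by
    intro K
    induction K with
    | zero => simp
    | succ K ih =>
      rw [show (K + 1) * L = K * L + L from by ring, Finset.sum_range_add, ih,
        Finset.sum_range_succ, add_mul]
      congr 1
      have hC : ∀ j ∈ range L, θ ^ ((K * L + j) / L) = θ ^ K := by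
        intro j hj
        simp only [Finset.mem_range] at hj
        congr 1
        rw [add_comm, Nat.add_mul_div_right _ _ hL, Nat.div_eq_of_lt hj, zero_add]
      rw [Finset.sum_congr rfl hC, Finset.sum_const, Finset.card_range, nsmul_eq_mul, mul_comm]
  have mono : ∑ t ∈ range n, θ ^ (t / L) ≤ ∑ t ∈ range ((n / L + 1) * L), θ ^ (t / L) := by
    apply Finset.sum_le_sum_of_subset_of_nonneg
    · apply Finset.range_subset_range.mpr
      have h2 := Nat.lt_div_mul_add (a := n) hL
      have h3 : (n / L + 1) * L = n / L * L + L := by ring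
      omega
    · intro i _ _; positivity
  have geo : ∑ u ∈ range (n / L + 1), θ ^ u ≤ 1 / (1 - θ) := by
    rw [geom_sum_eq (by linarith : θ ≠ 1)]
    have hrw : (θ ^ (n / L + 1) - 1) / (θ - 1) = (1 - θ ^ (n / L + 1)) / (1 - θ) := by
      rw [div_eq_div_iff (by linarith : θ - 1 ≠ 0) h1'.ne']; ring
    rw [hrw]
    gcongr
    nlinarith [pow_nonneg h0 (n / L + 1)]
  calc ∑ t ∈ range n, θ ^ (t / L) ≤ (∑ u ∈ range (n / L + 1), θ ^ u) * L := by
        rw [← key]; exact mono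
    _ ≤ (1 / (1 - θ)) * L := by
        apply mul_le_mul_of_nonneg_right geo (by positivity)
    _ = L / (1 - θ) := by ring

lemma per_mul {f : ℕ → ℝ} {d : ℕ} (hper : ∀ k, f (k + d) = f k) (c : ℕ) (k : ℕ) :
    f (k + c * d) = f k := by
  induction c with
  | zero => simp
  | succ c ih => rw [show k + (c+1)*d = (k + c*d) + d from by ring, hper, ih]

lemma exists_ub (f : ℕ → ℝ) (hf0 : ∀ k, 0 ≤ f k) {L : ℕ} (hL : 0 < L)
    (hper : ∀ k, f (k + L) = f k) :
    ∃ Mx : ℝ, 1 ≤ Mx ∧ ∀ k, f k ≤ Mx := by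
  have hsn : 0 ≤ ∑ j ∈ range L, f j := Finset.sum_nonneg fun j _ => hf0 j
  refine ⟨1 + ∑ j ∈ range L, f j, by linarith, fun k => ?_⟩
  have h1 : f k = f (k % L) := per_mod hL hper k
  have h2 : f (k % L) ≤ ∑ j ∈ range L, f j :=
    Finset.single_le_sum (fun j _ => hf0 j) (Finset.mem_range.mpr (Nat.mod_lt _ hL))
  linarith

lemma exists_lb (f : ℕ → ℝ) (hf0 : ∀ k, 0 ≤ f k) {L : ℕ} (hL : 0 < L)
    (hper : ∀ k, f (k + L) = f k) (hQ : 0 < ∏ j ∈ range L, f j) :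
    ∃ mn : ℝ, 0 < mn ∧ mn ≤ 1 ∧ ∀ k, mn ≤ f k := by
  have hne : (range L).Nonempty := ⟨0, Finset.mem_range.mpr hL⟩
  have hpos : ∀ j ∈ range L, 0 < f j := by
    intro j hj
    rcases (hf0 j).lt_or_eq with h | h
    · exact h
    · exact absurd (Finset.prod_eq_zero hj h.symm) hQ.ne'
  refine ⟨min 1 ((range L).inf' hne f), ?_, min_le_left _ _, fun k => ?_⟩
  · apply lt_min one_pos
    rw [Finset.lt_inf'_iff]
    exact fun j hj => hpos j hj
  · calc min 1 ((range L).inf' hne f) ≤ (range L).inf' hne f := min_le_right _ _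
      _ ≤ f (k % L) := Finset.inf'_le f (Finset.mem_range.mpr (Nat.mod_lt _ hL))
      _ = f k := (per_mod hL hper k).symm

/-- finitely supported element of c₀ -/
noncomputable def fs (v : ℕ → ℂ) (N : ℕ) (hv : ∀ k, N ≤ k → v k = 0) :
    ZeroAtInftyContinuousMap ℕ ℂ where
  toFun := v
  continuous_toFun := continuous_of_discreteTopology
  zero_at_infty' := by
    rw [cocompact_eq_cofinite]
    have hev : v =ᶠ[cofinite] 0 := by
      apply Set.Finite.subset (Set.finite_Iio N)
      intro k hk
      simp only [Set.mem_setOf_eq, Pi.zero_apply] at hk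
      simp only [Set.mem_Iio]
      by_contra h
      exact hk (hv k (by omega))
    exact Tendsto.congr' hev.symm tendsto_const_nhds

@[simp] lemma fs_apply (v : ℕ → ℂ) (N : ℕ) (hv) (k : ℕ) : fs v N hv k = v k := rfl

lemma abs_apply_le_norm (x : ZeroAtInftyContinuousMap ℕ ℂ) (k : ℕ) :
    Complex.abs (x k) ≤ ‖x‖ := by
  rw [← ZeroAtInftyContinuousMap.norm_toBCF_eq_norm, ← Complex.norm_eq_abs]
  exact BoundedContinuousFunction.norm_coe_le_norm x.toBCF k

lemma norm_le_of (x : ZeroAtInftyContinuousMap ℕ ℂ) (C : ℝ) (hC : 0 ≤ C)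
    (h : ∀ k, Complex.abs (x k) ≤ C) : ‖x‖ ≤ C := by
  rw [← ZeroAtInftyContinuousMap.norm_toBCF_eq_norm]
  exact BoundedContinuousFunction.norm_le hC |>.mpr (fun k => by
    rw [Complex.norm_eq_abs]; exact h k)

noncomputable def delta (k : ℕ) : ZeroAtInftyContinuousMap ℕ ℂ :=
  fs (fun j => if j = k then 1 else 0) (k + 1) (fun j hj => by
    simp only [ite_eq_right_iff]; intro h; omega)

@[simp] lemma delta_apply (k j : ℕ) : delta k j = if j = k then 1 else 0 := rfl

/-- set of finitely supported elements -/
def D : Set (ZeroAtInftyContinuousMap ℕ ℂ) :=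
  {x | ∃ N, ∀ k, N ≤ k → x k = 0}

lemma dense_D : Dense D := by
  rw [Metric.dense_iff]
  intro x ε hε
  have hx : Tendsto x cofinite (𝓝 0) := by
    have := x.zero_at_infty'
    rwa [cocompact_eq_cofinite] at this
  have hev : ∀ᶠ k in cofinite, Complex.abs (x k) < ε / 2 := by
    have := Metric.tendsto_nhds.mp hx (ε / 2) (by linarith)
    simpa [Complex.dist_eq, Complex.norm_eq_abs] using this
  obtain ⟨N, hN⟩ : ∃ N, ∀ k, N ≤ k → Complex.abs (x k) < ε / 2 := by
    have hfin := hev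
    rw [Nat.cofinite_eq_atTop, eventually_atTop] at hfin
    obtain ⟨N, hN⟩ := hfin
    exact ⟨N, fun k hk => hN k hk⟩
  refine ⟨fs (fun k => if k < N then x k else 0) N (fun k hk => by
      simp [Nat.not_lt.mpr hk]), ?_, ?_⟩
  · rw [Metric.mem_ball, dist_eq_norm]
    have hle : ‖fs (fun k => if k < N then x k else 0) N (fun k hk => by
        simp [Nat.not_lt.mpr hk]) - x‖ ≤ ε / 2 := by
      apply norm_le_of _ _ (by linarith)
      intro k
      rw [ZeroAtInftyContinuousMap.sub_apply, fs_apply]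
      rcases lt_or_ge k N with h | h
      · simp only [if_pos h, sub_self, map_zero]; linarith
      · rw [if_neg (Nat.not_lt.mpr h), zero_sub, map_neg_eq_map]
        exact (hN k h).le
    linarith
  · exact ⟨N, fun k hk => by simp [Nat.not_lt.mpr hk]⟩

/-- evaluation as an additive monoid hom -/
noncomputable def evalAM (j : ℕ) : ZeroAtInftyContinuousMap ℕ ℂ →+ ℂ where
  toFun x := x j
  map_zero' := rfl
  map_add' _ _ := rfl

lemma apply_sum {ι : Type*} (F : Finset ι) (g : ι → ZeroAtInftyContinuousMap ℕ ℂ) (j : ℕ) :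
    (∑ k ∈ F, g k) j = ∑ k ∈ F, g k j :=
  map_sum (evalAM j) g F

lemma mem_D_decomp (x : ZeroAtInftyContinuousMap ℕ ℂ) (N : ℕ) (hx : ∀ k, N ≤ k → x k = 0) :
    x = ∑ k ∈ range N, x k • delta k := by
  ext j
  rw [apply_sum]
  have : ∀ k ∈ range N, (x k • delta k) j = if j = k then x j else 0 := by
    intro k hk
    rw [ZeroAtInftyContinuousMap.smul_apply, delta_apply]
    split
    · next h => subst h; simp
    · simp
  rw [Finset.sum_congr rfl this, Finset.sum_ite_eq]
  split
  · next h => rfl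
  · next h =>
    simp only [Finset.mem_range] at h
    exact hx j (by omega)

lemma cond_iff {l l' : ℕ} (hl : 0 < l) (hl' : 0 < l') {p q : ℝ} (hp : 0 ≤ p) (hq : 0 ≤ q) :
    p ^ ((1:ℝ) / l) = q ^ ((1:ℝ) / l') ↔ p ^ l' = q ^ l := by
  have hlR : (l : ℝ) ≠ 0 := Nat.cast_ne_zero.mpr hl.ne'
  have hlR' : (l' : ℝ) ≠ 0 := Nat.cast_ne_zero.mpr hl'.ne'
  constructor
  · intro h
    have h1 := congrArg (fun x : ℝ => x ^ (l * l' : ℕ)) h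
    rw [← Real.rpow_natCast (p ^ ((1:ℝ)/l)) (l * l'), ← Real.rpow_natCast (q ^ ((1:ℝ)/l')) (l * l'),
      ← Real.rpow_mul hp, ← Real.rpow_mul hq] at h1
    have e1 : (1:ℝ)/l * ((l * l' : ℕ) : ℝ) = ((l' : ℕ) : ℝ) := by push_cast; field_simp
    have e2 : (1:ℝ)/l' * ((l * l' : ℕ) : ℝ) = ((l : ℕ) : ℝ) := by push_cast; field_simp
    rw [e1, e2, Real.rpow_natCast, Real.rpow_natCast] at h1
    exact h1
  · intro h
    have h1 := congrArg (fun x : ℝ => x ^ ((1:ℝ) / ((l * l' : ℕ) : ℝ))) h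
    rw [← Real.rpow_natCast p l', ← Real.rpow_natCast q l,
      ← Real.rpow_mul hp, ← Real.rpow_mul hq] at h1
    have e1 : ((l' : ℕ) : ℝ) * ((1:ℝ) / ((l * l' : ℕ) : ℝ)) = (1:ℝ)/l := by
      push_cast
      rw [mul_one_div, div_eq_div_iff (mul_ne_zero hlR hlR') hlR]
      ring
    have e2 : ((l : ℕ) : ℝ) * ((1:ℝ) / ((l * l' : ℕ) : ℝ)) = (1:ℝ)/l' := by
      push_cast
      rw [mul_one_div, div_eq_div_iff (mul_ne_zero hlR hlR') hlR']
      ring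
    rw [e1, e2] at h1
    exact h1

section main

variable {l l' : ℕ} {a b : ℕ → ℂ}
  {T : ZeroAtInftyContinuousMap ℕ ℂ →L[ℂ] ZeroAtInftyContinuousMap ℕ ℂ}

lemma lem_bddBelow (hl : 0 < l) (hl' : 0 < l')
    (ha : ∀ k, a (k + l) = a k) (hb : ∀ k, b (k + l') = b k)
    (h0 : ∀ x, T x 0 = a 0 * x 0)
    (hS : ∀ x k, T x (k + 1) = b k * x k + a (k + 1) * x (k + 1))
    (hlt : (∏ j ∈ range l', Complex.abs (b j)) ^ l < (∏ j ∈ range l, Complex.abs (a j)) ^ l') :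
    ∃ c > 0, ∀ x, c * ‖x‖ ≤ ‖T x‖ := by
  set fa : ℕ → ℝ := fun k => Complex.abs (a k) with hfa
  set fb : ℕ → ℝ := fun k => Complex.abs (b k) with hfb
  have hfa0 : ∀ k, 0 ≤ fa k := fun k => Complex.abs.nonneg _
  have hfb0 : ∀ k, 0 ≤ fb k := fun k => Complex.abs.nonneg _
  set L := l * l' with hLdef
  have hL : 0 < L := Nat.mul_pos hl hl'
  have hfal : ∀ k, fa (k + l) = fa k := fun k => by
    show Complex.abs (a (k + l)) = Complex.abs (a k); rw [ha k]
  have hfbl : ∀ k, fb (k + l') = fb k := fun k => by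
    show Complex.abs (b (k + l')) = Complex.abs (b k); rw [hb k]
  have hfaper : ∀ k, fa (k + L) = fa k := fun k => by
    rw [hLdef, mul_comm l l']; exact per_mul hfal l' k
  have hfbper : ∀ k, fb (k + L) = fb k := fun k => by
    rw [hLdef]; exact per_mul hfbl l k
  set Qa : ℝ := (∏ j ∈ range l, fa j) ^ l' with hQadef
  set Qb : ℝ := (∏ j ∈ range l', fb j) ^ l with hQbdef
  have hQa : ∏ j ∈ range L, fa j = Qa := by
    have h := per_block_pow (f := fa) hl hfal 0 l'
    simp only [zero_add] at h
    rw [hLdef, mul_comm l l']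
    exact h
  have hQb : ∏ j ∈ range L, fb j = Qb := by
    have h := per_block_pow (f := fb) hl' hfbl 0 l
    simp only [zero_add] at h
    rw [hLdef]
    exact h
  have hQb0 : 0 ≤ Qb := pow_nonneg (Finset.prod_nonneg fun j _ => hfb0 j) _
  have hQapos : 0 < Qa := lt_of_le_of_lt hQb0 hlt
  obtain ⟨Ma, hMa1, hMa⟩ := exists_ub fa hfa0 hL hfaper
  obtain ⟨Mb, hMb1, hMb⟩ := exists_ub fb hfb0 hL hfbper
  obtain ⟨mna, hmna0, hmna1, hmna⟩ := exists_lb fa hfa0 hL hfaper (hQa ▸ hQapos)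
  have hane : ∀ k, a k ≠ 0 := by
    intro k hk
    have : fa k = 0 := by simp [hfa, hk]
    have := hmna k
    rw [‹fa k = 0›] at this
    linarith
  set θ : ℝ := Qb / Qa with hθdef
  have hθ0 : 0 ≤ θ := div_nonneg hQb0 hQapos.le
  have hθ1 : θ < 1 := (div_lt_one hQapos).mpr hlt
  set C : ℝ := (Mb ^ L / mna ^ L) * (L / (1 - θ)) with hCdef
  have hCpos : 0 < C := by
    apply mul_pos
    · apply div_pos (by positivity) (by positivity)
    · apply div_pos (by exact_mod_cast hL) (by linarith)
  refine ⟨C⁻¹, inv_pos.mpr hCpos, fun x => ?_⟩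
  set y := T x with hy
  -- recursion facts
  have hy0 : y 0 = a 0 * x 0 := h0 x
  have hyS : ∀ k, y (k + 1) = b k * x k + a (k + 1) * x (k + 1) := hS x
  -- solution formula
  set cc : ℕ → ℕ → ℂ := fun n m =>
    (∏ j ∈ Finset.Ico m n, (-b j)) / (∏ j ∈ Finset.Icc m n, a j) with hccdef
  have formula : ∀ n, x n = ∑ m ∈ range (n + 1), cc n m * y m := by
    intro n
    induction n with
    | zero =>
      have hc00 : cc 0 0 = 1 / a 0 := by
        simp only [hccdef]
        rw [Finset.Ico_self, Finset.prod_empty, Finset.Icc_self, Finset.prod_singleton]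
      rw [Finset.sum_range_one, hc00, hy0]
      field_simp [hane 0]
    | succ n ih =>
      have hkey : ∀ m ∈ range (n + 1), cc (n + 1) m * y m = (-(b n) / a (n + 1)) * (cc n m * y m) := by
        intro m hm
        simp only [Finset.mem_range] at hm
        have hmn : m ≤ n := by omega
        have e1 : ∏ j ∈ Finset.Ico m (n + 1), (-b j) = (∏ j ∈ Finset.Ico m n, (-b j)) * (-b n) :=
          Finset.prod_Ico_succ_top hmn _
        have e2 : ∏ j ∈ Finset.Icc m (n + 1), a j = (∏ j ∈ Finset.Icc m n, a j) * a (n + 1) := by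
          rw [← Finset.Ico_add_one_right_eq_Icc, ← Finset.Ico_add_one_right_eq_Icc]
          exact Finset.prod_Ico_succ_top (by omega) _
        simp only [hccdef, e1, e2]
        rw [mul_div_mul_comm]
        ring
      rw [Finset.sum_range_succ, Finset.sum_congr rfl hkey, ← Finset.mul_sum, ← ih]
      have e3 : cc (n + 1) (n + 1) = 1 / a (n + 1) := by
        simp only [hccdef]
        rw [Finset.Ico_self, Finset.prod_empty, Finset.Icc_self, Finset.prod_singleton]
      rw [e3]
      have hx1 : x (n + 1) = (y (n + 1) - b n * x n) / a (n + 1) := by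
        rw [eq_div_iff (hane (n + 1))]
        linear_combination -(hyS n)
      rw [hx1]
      field_simp [hane (n + 1)]
      ring
  -- bound on coefficients
  have hccbound : ∀ n m, m ≤ n → Complex.abs (cc n m) ≤ (Mb ^ L / mna ^ L) * θ ^ ((n - m) / L) := by
    intro n m hmn
    set t := n - m with htdef
    set u := t / L with hudef
    have hu1 : u * L ≤ t := Nat.div_mul_le_self t L
    have hu2s : t < u * L + L := by rw [hudef]; exact Nat.lt_div_mul_add hL
    have hu2 : t ≤ u * L + L := hu2s.le
    have hnum : Complex.abs (∏ j ∈ Finset.Ico m n, (-b j)) ≤ Qb ^ u * Mb ^ L := by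
      rw [map_prod]
      have : ∀ j ∈ Finset.Ico m n, Complex.abs (-b j) = fb j := fun j _ => by
        simp [hfb]
      rw [Finset.prod_congr rfl this, Finset.prod_Ico_eq_prod_range]
      rw [← hQb, ← htdef]
      exact per_window_up hL hfbper hfb0 hMb hMb1 m t u hu1 hu2
    have hden : Qa ^ u * mna ^ L ≤ Complex.abs (∏ j ∈ Finset.Icc m n, a j) := by
      rw [map_prod]
      have : ∀ j ∈ Finset.Icc m n, Complex.abs (a j) = fa j := fun j _ => rfl
      rw [Finset.prod_congr rfl this, ← Finset.Ico_add_one_right_eq_Icc, Finset.prod_Ico_eq_prod_range]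
      have hts : n + 1 - m = t + 1 := by omega
      rw [hts, ← hQa]
      exact per_window_lo hL hfaper hmna hmna0 hmna1 m (t + 1) u (by omega) (by omega)
    have hdenpos : 0 < Complex.abs (∏ j ∈ Finset.Icc m n, a j) := by
      rw [map_prod]
      exact Finset.prod_pos fun j _ => lt_of_le_of_ne (Complex.abs.nonneg _)
        (fun h => hane j (by simpa using h.symm))
    simp only [hccdef, map_div₀]
    calc Complex.abs (∏ j ∈ Finset.Ico m n, (-b j)) / Complex.abs (∏ j ∈ Finset.Icc m n, a j)
        ≤ (Qb ^ u * Mb ^ L) / (Qa ^ u * mna ^ L) :=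
          div_le_div₀ (mul_nonneg (pow_nonneg hQb0 u) (pow_nonneg (zero_le_one.trans hMb1) L))
            hnum (mul_pos (pow_pos hQapos u) (pow_pos hmna0 L)) hden
      _ = (Mb ^ L / mna ^ L) * θ ^ u := by
          rw [hθdef, div_pow]
          rw [div_mul_div_comm, mul_comm (Qb ^ u) (Mb ^ L), mul_comm (Qa ^ u) (mna ^ L)]
  -- final estimate
  have hxb : ∀ n, Complex.abs (x n) ≤ C * ‖y‖ := by
    intro n
    rw [formula n]
    calc Complex.abs (∑ m ∈ range (n + 1), cc n m * y m)
        ≤ ∑ m ∈ range (n + 1), Complex.abs (cc n m * y m) := Complex.abs.sum_le _ _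
      _ ≤ ∑ m ∈ range (n + 1), ((Mb ^ L / mna ^ L) * θ ^ ((n - m) / L)) * ‖y‖ := by
          apply Finset.sum_le_sum
          intro m hm
          simp only [Finset.mem_range] at hm
          rw [map_mul]
          exact mul_le_mul (hccbound n m (by omega)) (abs_apply_le_norm y m)
            (Complex.abs.nonneg _) (by positivity)
      _ = ((Mb ^ L / mna ^ L) * ∑ m ∈ range (n + 1), θ ^ ((n - m) / L)) * ‖y‖ := by
          rw [← Finset.sum_mul, ← Finset.mul_sum]
      _ ≤ C * ‖y‖ := by
          apply mul_le_mul_of_nonneg_right _ (norm_nonneg y)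
          rw [hCdef]
          apply mul_le_mul_of_nonneg_left _ (by positivity)
          have hrefl : ∑ m ∈ range (n + 1), θ ^ ((n - m) / L) = ∑ t ∈ range (n + 1), θ ^ (t / L) := by
            rw [← Finset.sum_range_reflect]
            apply Finset.sum_congr rfl
            intro m hm
            simp only [Finset.mem_range] at hm
            congr 2
            omega
          rw [hrefl]
          exact sum_pow_div_le hθ0 hθ1 hL (n + 1)
  have hxn : ‖x‖ ≤ C * ‖y‖ := norm_le_of x _ (by positivity) hxb
  rw [inv_mul_le_iff₀ hCpos]
  exact hxn

lemma lem_inj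
    (hane : ∀ k, a k ≠ 0)
    (h0 : ∀ x, T x 0 = a 0 * x 0)
    (hS : ∀ x k, T x (k + 1) = b k * x k + a (k + 1) * x (k + 1)) :
    Function.Injective ⇑T := by
  intro x y hxy
  have hz : ∀ k, (x - y) k = 0 := by
    have hTz : T (x - y) = 0 := by rw [map_sub, hxy, sub_self]
    intro k
    induction k with
    | zero =>
      have := h0 (x - y)
      rw [hTz] at this
      have h2 : (0 : ZeroAtInftyContinuousMap ℕ ℂ) 0 = 0 := rfl
      rw [h2] at this
      exact (mul_eq_zero.mp this.symm).resolve_left (hane 0)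
    | succ k ih =>
      have := hS (x - y) k
      rw [hTz] at this
      have h2 : (0 : ZeroAtInftyContinuousMap ℕ ℂ) (k + 1) = 0 := rfl
      rw [h2, ih, mul_zero, zero_add] at this
      exact (mul_eq_zero.mp this.symm).resolve_left (hane (k + 1))
  ext k
  have := hz k
  rw [ZeroAtInftyContinuousMap.sub_apply] at this
  exact sub_eq_zero.mp this

lemma lem_spec {B : ZeroAtInftyContinuousMap ℕ ℂ →L[ℂ] ZeroAtInftyContinuousMap ℕ ℂ} {lam : ℂ}
    (hT : T = B - lam • 1)
    (hnb : ¬ ∃ c > (0:ℝ), ∀ x, c * ‖x‖ ≤ ‖T x‖) :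
    lam ∈ spectrum ℂ B := by
  rw [spectrum.mem_iff]
  intro hu
  obtain ⟨v, hv⟩ := hu
  apply hnb
  set R : ZeroAtInftyContinuousMap ℕ ℂ →L[ℂ] ZeroAtInftyContinuousMap ℕ ℂ := ↑v⁻¹ with hR
  have hid : ∀ x, R ((lam • 1 - B) x) = x := by
    intro x
    have h1 : (↑v⁻¹ * ↑v : ZeroAtInftyContinuousMap ℕ ℂ →L[ℂ] ZeroAtInftyContinuousMap ℕ ℂ) = 1 := by
      rw [← Units.val_mul, inv_mul_cancel]; rfl
    have h2 : (↑v : ZeroAtInftyContinuousMap ℕ ℂ →L[ℂ] ZeroAtInftyContinuousMap ℕ ℂ) = lam • 1 - B := by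
      rw [hv]
      rw [Algebra.algebraMap_eq_smul_one]
    calc R ((lam • 1 - B) x) = (R.comp (lam • 1 - B)) x := rfl
      _ = x := by
        rw [hR, ← h2, ← ContinuousLinearMap.mul_def, h1]
        rfl
  have hRpos : 0 < ‖R‖ := by
    rcases (norm_nonneg R).lt_or_eq with h | h
    · exact h
    · exfalso
      have h1 : ‖delta 0‖ ≤ 0 := by
        calc ‖delta 0‖ = ‖R ((lam • 1 - B) (delta 0))‖ := by rw [hid]
          _ ≤ ‖R‖ * ‖(lam • 1 - B) (delta 0)‖ := R.le_opNorm _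
          _ = 0 := by rw [← h, zero_mul]
      have h2 := abs_apply_le_norm (delta 0) 0
      rw [delta_apply] at h2
      rw [if_pos (by trivial), map_one] at h2
      linarith
  refine ⟨‖R‖⁻¹, inv_pos.mpr hRpos, fun x => ?_⟩
  have h3 : ‖x‖ ≤ ‖R‖ * ‖T x‖ := by
    calc ‖x‖ = ‖R ((lam • 1 - B) x)‖ := by rw [hid x]
      _ ≤ ‖R‖ * ‖(lam • 1 - B) x‖ := R.le_opNorm _
      _ = ‖R‖ * ‖T x‖ := by
        congr 1
        rw [hT]
        have : (lam • 1 - B) x = -((B - lam • 1) x) := by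
          rw [ContinuousLinearMap.sub_apply, ContinuousLinearMap.sub_apply, neg_sub]
        rw [this, norm_neg]
  rw [inv_mul_le_iff₀ hRpos]
  exact h3

lemma lem_Tdelta
    (h0 : ∀ x, T x 0 = a 0 * x 0)
    (hS : ∀ x k, T x (k + 1) = b k * x k + a (k + 1) * x (k + 1)) (k : ℕ) :
    T (delta k) = a k • delta k + b k • delta (k + 1) := by
  ext j
  rw [ZeroAtInftyContinuousMap.add_apply, ZeroAtInftyContinuousMap.smul_apply,
    ZeroAtInftyContinuousMap.smul_apply]
  cases j with
  | zero =>
    rw [h0 (delta k)]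
    rcases eq_or_ne k 0 with rfl | hk
    · simp
    · simp [Ne.symm hk, (show (0:ℕ) ≠ k + 1 from by omega)]
  | succ j =>
    rw [hS (delta k) j]
    rcases eq_or_ne j k with rfl | h1
    · simp [(show j + 1 ≠ j from by omega)]
    · rcases eq_or_ne (j + 1) k with h2 | h2
      · subst h2
        simp [h1]
      · simp [h1, h2, (show j + 1 ≠ k + 1 from by omega)]

lemma lem_notdense (hl : 0 < l) (hl' : 0 < l')
    (ha : ∀ k, a (k + l) = a k) (hb : ∀ k, b (k + l') = b k)
    (hbne : ∀ k, b k ≠ 0)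
    (h0 : ∀ x, T x 0 = a 0 * x 0)
    (hS : ∀ x k, T x (k + 1) = b k * x k + a (k + 1) * x (k + 1))
    (hlt : (∏ j ∈ range l, Complex.abs (a j)) ^ l' < (∏ j ∈ range l', Complex.abs (b j)) ^ l) :
    ¬ DenseRange ⇑T := by
  set fa : ℕ → ℝ := fun k => Complex.abs (a k) with hfa
  set fb : ℕ → ℝ := fun k => Complex.abs (b k) with hfb
  have hfa0 : ∀ k, 0 ≤ fa k := fun k => Complex.abs.nonneg _
  have hfb0 : ∀ k, 0 ≤ fb k := fun k => Complex.abs.nonneg _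
  set L := l * l' with hLdef
  have hL : 0 < L := Nat.mul_pos hl hl'
  have hfal : ∀ k, fa (k + l) = fa k := fun k => by
    show Complex.abs (a (k + l)) = Complex.abs (a k); rw [ha k]
  have hfbl : ∀ k, fb (k + l') = fb k := fun k => by
    show Complex.abs (b (k + l')) = Complex.abs (b k); rw [hb k]
  have hfaper : ∀ k, fa (k + L) = fa k := fun k => by
    rw [hLdef, mul_comm l l']; exact per_mul hfal l' k
  have hfbper : ∀ k, fb (k + L) = fb k := fun k => by
    rw [hLdef]; exact per_mul hfbl l k
  set Qa : ℝ := (∏ j ∈ range l, fa j) ^ l' with hQadef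
  set Qb : ℝ := (∏ j ∈ range l', fb j) ^ l with hQbdef
  have hQa : ∏ j ∈ range L, fa j = Qa := by
    have h := per_block_pow (f := fa) hl hfal 0 l'
    simp only [zero_add] at h
    rw [hLdef, mul_comm l l']
    exact h
  have hQb : ∏ j ∈ range L, fb j = Qb := by
    have h := per_block_pow (f := fb) hl' hfbl 0 l
    simp only [zero_add] at h
    rw [hLdef]
    exact h
  have hQa0 : 0 ≤ Qa := pow_nonneg (Finset.prod_nonneg fun j _ => hfa0 j) _
  have hQbpos : 0 < Qb := lt_of_le_of_lt hQa0 hlt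
  obtain ⟨Ma, hMa1, hMa⟩ := exists_ub fa hfa0 hL hfaper
  obtain ⟨mnb, hmnb0, hmnb1, hmnb⟩ := exists_lb fb hfb0 hL hfbper (hQb ▸ hQbpos)
  set θ : ℝ := Qa / Qb with hθdef
  have hθ0 : 0 ≤ θ := div_nonneg hQa0 hQbpos.le
  have hθ1 : θ < 1 := (div_lt_one hQbpos).mpr hlt
  set u : ℕ → ℂ := fun k => ∏ j ∈ range k, (-(a j) / b j) with hudef
  have hu0 : u 0 = 1 := by simp [hudef]
  have hurec : ∀ k, a k * u k + b k * u (k + 1) = 0 := by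
    intro k
    have : u (k + 1) = u k * (-(a k) / b k) := Finset.prod_range_succ _ k
    rw [this]
    field_simp [hbne k]
    ring
  have habs : ∀ k, Complex.abs (u k) ≤ (Ma ^ L / mnb ^ L) * θ ^ (k / L) := by
    intro k
    have hq1 : u k = ∏ j ∈ range k, (-(a j) / b j) := rfl
    have habs2 : Complex.abs (u k) = (∏ j ∈ range k, fa j) / (∏ j ∈ range k, fb j) := by
      rw [hq1, map_prod, ← Finset.prod_div_distrib]
      apply Finset.prod_congr rfl
      intro j _
      rw [map_div₀, map_neg_eq_map]
    set w := k / L with hwdef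
    have hw1 : w * L ≤ k := Nat.div_mul_le_self k L
    have hw2s : k < w * L + L := by rw [hwdef]; exact Nat.lt_div_mul_add hL
    have hnum : ∏ j ∈ range k, fa j ≤ Qa ^ w * Ma ^ L := by
      have := per_window_up hL hfaper hfa0 hMa hMa1 0 k w hw1 hw2s.le
      simp only [zero_add] at this
      rwa [hQa] at this
    have hden : Qb ^ w * mnb ^ L ≤ ∏ j ∈ range k, fb j := by
      have := per_window_lo hL hfbper hmnb hmnb0 hmnb1 0 k w hw1 hw2s.le
      simp only [zero_add] at this
      rwa [hQb] at this
    rw [habs2]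
    calc (∏ j ∈ range k, fa j) / (∏ j ∈ range k, fb j)
        ≤ (Qa ^ w * Ma ^ L) / (Qb ^ w * mnb ^ L) :=
          div_le_div₀ (mul_nonneg (pow_nonneg hQa0 w) (pow_nonneg (zero_le_one.trans hMa1) L))
            hnum (mul_pos (pow_pos hQbpos w) (pow_pos hmnb0 L)) hden
      _ = (Ma ^ L / mnb ^ L) * θ ^ w := by
          rw [hθdef, div_pow]
          rw [div_mul_div_comm, mul_comm (Qa ^ w) (Ma ^ L), mul_comm (Qb ^ w) (mnb ^ L)]
  have hsumm : Summable (fun k => Complex.abs (u k)) := by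
    apply summable_of_sum_range_le (c := (Ma ^ L / mnb ^ L) * (L / (1 - θ)))
      (fun k => Complex.abs.nonneg _)
    intro n
    calc ∑ k ∈ range n, Complex.abs (u k)
        ≤ ∑ k ∈ range n, (Ma ^ L / mnb ^ L) * θ ^ (k / L) :=
          Finset.sum_le_sum fun k _ => habs k
      _ = (Ma ^ L / mnb ^ L) * ∑ k ∈ range n, θ ^ (k / L) := by rw [Finset.mul_sum]
      _ ≤ (Ma ^ L / mnb ^ L) * (L / (1 - θ)) := by
          apply mul_le_mul_of_nonneg_left (sum_pow_div_le hθ0 hθ1 hL n)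
          have : (0:ℝ) < Ma ^ L / mnb ^ L :=
            div_pos (pow_pos (lt_of_lt_of_le one_pos hMa1) L) (pow_pos hmnb0 L)
          linarith
  have hxsum : ∀ x : ZeroAtInftyContinuousMap ℕ ℂ, Summable (fun k => u k * x k) := by
    intro x
    apply Summable.of_norm
    apply Summable.of_nonneg_of_le (fun k => norm_nonneg _)
      (fun k => ?_) (hsumm.mul_right ‖x‖)
    rw [norm_mul, Complex.norm_eq_abs, Complex.norm_eq_abs]
    exact mul_le_mul_of_nonneg_left (abs_apply_le_norm x k) (Complex.abs.nonneg _)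
  set glin : ZeroAtInftyContinuousMap ℕ ℂ →ₗ[ℂ] ℂ := {
    toFun := fun x => ∑' k, u k * x k
    map_add' := fun x y => by
      rw [← Summable.tsum_add (hxsum x) (hxsum y)]
      apply tsum_congr
      intro k
      rw [ZeroAtInftyContinuousMap.add_apply]
      ring
    map_smul' := fun c x => by
      simp only [ZeroAtInftyContinuousMap.smul_apply, smul_eq_mul, RingHom.id_apply]
      rw [← tsum_mul_left]
      apply tsum_congr
      intro k
      ring } with hglin
  have hgbound : ∀ x, ‖glin x‖ ≤ (∑' k, Complex.abs (u k)) * ‖x‖ := by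
    intro x
    have h1 : ‖glin x‖ ≤ ∑' k, ‖u k * x k‖ := by
      apply norm_tsum_le_tsum_norm
      apply Summable.of_nonneg_of_le (fun k => norm_nonneg _)
        (fun k => ?_) (hsumm.mul_right ‖x‖)
      rw [norm_mul, Complex.norm_eq_abs, Complex.norm_eq_abs]
      exact mul_le_mul_of_nonneg_left (abs_apply_le_norm x k) (Complex.abs.nonneg _)
    apply h1.trans
    rw [← tsum_mul_right]
    apply Summable.tsum_le_tsum _ _ (hsumm.mul_right ‖x‖)
    · intro k
      rw [norm_mul, Complex.norm_eq_abs, Complex.norm_eq_abs]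
      exact mul_le_mul_of_nonneg_left (abs_apply_le_norm x k) (Complex.abs.nonneg _)
    · apply Summable.of_nonneg_of_le (fun k => norm_nonneg _)
        (fun k => ?_) (hsumm.mul_right ‖x‖)
      rw [norm_mul, Complex.norm_eq_abs, Complex.norm_eq_abs]
      exact mul_le_mul_of_nonneg_left (abs_apply_le_norm x k) (Complex.abs.nonneg _)
  set g : ZeroAtInftyContinuousMap ℕ ℂ →L[ℂ] ℂ :=
    glin.mkContinuous (∑' k, Complex.abs (u k)) hgbound with hg
  have hgapp : ∀ x, g x = ∑' k, u k * x k := fun x => rfl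
  have hgdelta : ∀ j, g (delta j) = u j := by
    intro j
    rw [hgapp]
    rw [tsum_eq_single j]
    · rw [delta_apply, if_pos rfl, mul_one]
    · intro k hk
      rw [delta_apply, if_neg hk, mul_zero]
  have hgTdelta : ∀ k, g (T (delta k)) = 0 := by
    intro k
    rw [lem_Tdelta h0 hS k, map_add, map_smul, map_smul, hgdelta, hgdelta]
    have := hurec k
    simpa using this
  intro hdr
  have hcont : Continuous fun z => g (T z) := g.continuous.comp T.continuous
  have hzero : (fun z : ZeroAtInftyContinuousMap ℕ ℂ => g (T z)) = fun _ => 0 := by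
    apply Continuous.ext_on dense_D hcont continuous_const
    intro z hz
    obtain ⟨N, hN⟩ := hz
    show g (T z) = 0
    conv_lhs => rw [mem_D_decomp z N hN]
    rw [map_sum, map_sum]
    apply Finset.sum_eq_zero
    intro k _
    rw [map_smul, map_smul, hgTdelta, smul_zero]
  have hr : Set.range ⇑T ⊆ {w | g w = 0} := by
    rintro _ ⟨z, rfl⟩
    exact congrFun hzero z
  have hclosed : IsClosed {w : ZeroAtInftyContinuousMap ℕ ℂ | g w = 0} :=
    isClosed_eq g.continuous continuous_const
  have hall : ∀ w, g w = 0 := by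
    intro w
    have h1 : closure (Set.range ⇑T) ⊆ {w | g w = 0} :=
      hclosed.closure_subset_iff.mpr hr
    have h2 : w ∈ closure (Set.range ⇑T) := by
      rw [hdr.closure_range]
      trivial
    exact h1 h2
  have := hall (delta 0)
  rw [hgdelta 0, hu0] at this
  exact one_ne_zero this

lemma abs_ccast_sub_le {m1 m2 : ℕ} (h : m1 ≤ m2 + 1) (h' : m2 ≤ m1 + 1) :
    Complex.abs ((m1 : ℂ) - (m2 : ℂ)) ≤ 1 := by
  rcases le_total m1 m2 with hh | hh
  · have : m2 = m1 ∨ m2 = m1 + 1 := by omega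
    rcases this with rfl | rfl
    · simp
    · rw [show ((m1 : ℂ)) - ((m1 + 1 : ℕ) : ℂ) = -1 by push_cast; ring]
      simp
  · have : m1 = m2 ∨ m1 = m2 + 1 := by omega
    rcases this with rfl | rfl
    · simp
    · rw [show (((m2 + 1 : ℕ) : ℂ)) - (m2 : ℂ) = 1 by push_cast; ring]
      simp

lemma lem_notbdd (hl : 0 < l) (hl' : 0 < l')
    (ha : ∀ k, a (k + l) = a k) (hb : ∀ k, b (k + l') = b k)
    (hbne : ∀ k, b k ≠ 0)
    (h0 : ∀ x, T x 0 = a 0 * x 0)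
    (hS : ∀ x k, T x (k + 1) = b k * x k + a (k + 1) * x (k + 1))
    (heq : (∏ j ∈ range l, Complex.abs (a j)) ^ l' = (∏ j ∈ range l', Complex.abs (b j)) ^ l) :
    ¬ ∃ c > (0:ℝ), ∀ x, c * ‖x‖ ≤ ‖T x‖ := by
  set fa : ℕ → ℝ := fun k => Complex.abs (a k) with hfa
  set fb : ℕ → ℝ := fun k => Complex.abs (b k) with hfb
  have hfa0 : ∀ k, 0 ≤ fa k := fun k => Complex.abs.nonneg _
  have hfb0 : ∀ k, 0 ≤ fb k := fun k => Complex.abs.nonneg _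
  set L := l * l' with hLdef
  have hL : 0 < L := Nat.mul_pos hl hl'
  have hfal : ∀ k, fa (k + l) = fa k := fun k => by
    show Complex.abs (a (k + l)) = Complex.abs (a k); rw [ha k]
  have hfbl : ∀ k, fb (k + l') = fb k := fun k => by
    show Complex.abs (b (k + l')) = Complex.abs (b k); rw [hb k]
  have hfaper : ∀ k, fa (k + L) = fa k := fun k => by
    rw [hLdef, mul_comm l l']; exact per_mul hfal l' k
  have hfbper : ∀ k, fb (k + L) = fb k := fun k => by
    rw [hLdef]; exact per_mul hfbl l k
  set Qa : ℝ := (∏ j ∈ range l, fa j) ^ l' with hQadef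
  set Qb : ℝ := (∏ j ∈ range l', fb j) ^ l with hQbdef
  have hQa : ∏ j ∈ range L, fa j = Qa := by
    have h := per_block_pow (f := fa) hl hfal 0 l'
    simp only [zero_add] at h
    rw [hLdef, mul_comm l l']
    exact h
  have hQb : ∏ j ∈ range L, fb j = Qb := by
    have h := per_block_pow (f := fb) hl' hfbl 0 l
    simp only [zero_add] at h
    rw [hLdef]
    exact h
  have hQbpos : 0 < Qb := by
    apply pow_pos
    apply Finset.prod_pos
    intro j _
    exact AbsoluteValue.pos Complex.abs (hbne j)
  have hQapos : 0 < Qa := heq ▸ hQbpos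
  obtain ⟨Ma, hMa1, hMa⟩ := exists_ub fa hfa0 hL hfaper
  obtain ⟨Mb, hMb1, hMb⟩ := exists_ub fb hfb0 hL hfbper
  obtain ⟨mna, hmna0, hmna1, hmna⟩ := exists_lb fa hfa0 hL hfaper (hQa ▸ hQapos)
  obtain ⟨mnb, hmnb0, hmnb1, hmnb⟩ := exists_lb fb hfb0 hL hfbper (hQb ▸ hQbpos)
  have hane : ∀ k, a k ≠ 0 := by
    intro k hk
    have h1 := hmna k
    rw [hfa] at h1
    simp only [hk, map_zero] at h1
    linarith
  set e : ℕ → ℂ := fun k => ∏ j ∈ range k, (-(b j) / a (j + 1)) with hedef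
  have herec : ∀ k, b k * e k + a (k + 1) * e (k + 1) = 0 := by
    intro k
    have hstep : e (k + 1) = e k * (-(b k) / a (k + 1)) := Finset.prod_range_succ _ k
    rw [hstep]
    field_simp [hane (k + 1)]
    ring
  have habs_e : ∀ k, Complex.abs (e k)
      = (∏ j ∈ range k, fb j) / (∏ j ∈ range k, fa (1 + j)) := by
    intro k
    rw [hedef]
    simp only
    rw [map_prod, ← Finset.prod_div_distrib]
    apply Finset.prod_congr rfl
    intro j _
    rw [map_div₀, map_neg_eq_map, show 1 + j = j + 1 from by omega]
  have hdenpos : ∀ k, (0:ℝ) < ∏ j ∈ range k, fa (1 + j) :=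
    fun k => Finset.prod_pos fun j _ => lt_of_lt_of_le hmna0 (hmna _)
  set K2 : ℝ := Mb ^ L / mna ^ L with hK2def
  set K1 : ℝ := mnb ^ L / Ma ^ L with hK1def
  have hK2pos : 0 < K2 :=
    div_pos (pow_pos (lt_of_lt_of_le one_pos hMb1) L) (pow_pos hmna0 L)
  have hK1pos : 0 < K1 :=
    div_pos (pow_pos hmnb0 L) (pow_pos (lt_of_lt_of_le one_pos hMa1) L)
  have hub : ∀ k, Complex.abs (e k) ≤ K2 := by
    intro k
    set w := k / L with hwdef
    have hw1 : w * L ≤ k := Nat.div_mul_le_self k L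
    have hw2 : k ≤ w * L + L := (by rw [hwdef]; exact Nat.lt_div_mul_add hL : k < w * L + L).le
    have hnum : ∏ j ∈ range k, fb j ≤ Qb ^ w * Mb ^ L := by
      have := per_window_up hL hfbper hfb0 hMb hMb1 0 k w hw1 hw2
      simp only [zero_add] at this
      rwa [hQb] at this
    have hden : Qa ^ w * mna ^ L ≤ ∏ j ∈ range k, fa (1 + j) :=
      hQa ▸ per_window_lo hL hfaper hmna hmna0 hmna1 1 k w hw1 hw2
    rw [habs_e]
    calc (∏ j ∈ range k, fb j) / (∏ j ∈ range k, fa (1 + j))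
        ≤ (Qb ^ w * Mb ^ L) / (Qa ^ w * mna ^ L) :=
          div_le_div₀ (mul_nonneg (pow_nonneg hQbpos.le w) (pow_nonneg (zero_le_one.trans hMb1) L))
            hnum (mul_pos (pow_pos hQapos w) (pow_pos hmna0 L)) hden
      _ = K2 := by
          rw [heq, hK2def, mul_div_mul_left _ _ (pow_pos hQbpos w).ne']
  have hlb : ∀ k, K1 ≤ Complex.abs (e k) := by
    intro k
    set w := k / L with hwdef
    have hw1 : w * L ≤ k := Nat.div_mul_le_self k L
    have hw2 : k ≤ w * L + L := (by rw [hwdef]; exact Nat.lt_div_mul_add hL : k < w * L + L).le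
    have hnum : Qb ^ w * mnb ^ L ≤ ∏ j ∈ range k, fb j := by
      have := per_window_lo hL hfbper hmnb hmnb0 hmnb1 0 k w hw1 hw2
      simp only [zero_add] at this
      rwa [hQb] at this
    have hden : ∏ j ∈ range k, fa (1 + j) ≤ Qa ^ w * Ma ^ L :=
      hQa ▸ per_window_up hL hfaper hfa0 hMa hMa1 1 k w hw1 hw2
    rw [habs_e]
    calc K1 = (Qb ^ w * mnb ^ L) / (Qb ^ w * Ma ^ L) := by
          rw [hK1def, mul_div_mul_left _ _ (pow_pos hQbpos w).ne']
      _ ≤ (∏ j ∈ range k, fb j) / (∏ j ∈ range k, fa (1 + j)) := by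
          apply div_le_div₀ (Finset.prod_nonneg fun j _ => hfb0 j) hnum (hdenpos k)
          rw [← heq]
          exact hden
  rintro ⟨c, hc, hbd⟩
  set C2 : ℝ := Mb * K2 with hC2def
  have hC2pos : 0 < C2 := mul_pos (lt_of_lt_of_le one_pos hMb1) hK2pos
  have key : ∀ n : ℕ, 1 ≤ n → c * K1 ≤ C2 / n := by
    intro n hn
    have hnR : (0:ℝ) < n := by exact_mod_cast hn
    set φ : ℕ → ℂ := fun k => ((min k (2 * n - k) : ℕ) : ℂ) / n with hφdef
    have hφsupp : ∀ k, 2 * n ≤ k → φ k * e k = 0 := by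
      intro k hk
      have : min k (2 * n - k) = 0 := by omega
      rw [hφdef]
      simp only [this, Nat.cast_zero, zero_div, zero_mul]
    set w : ZeroAtInftyContinuousMap ℕ ℂ := fs (fun k => φ k * e k) (2 * n) hφsupp with hwdef
    have hwk : ∀ k, w k = φ k * e k := fun k => by rw [hwdef]; exact fs_apply _ _ _ k
    have hφdiff : ∀ k, Complex.abs (φ k - φ (k + 1)) ≤ 1 / n := by
      intro k
      rw [hφdef]
      simp only
      rw [div_sub_div_same, map_div₀]
      have h2 : Complex.abs ((n : ℂ)) = n := by
        rw [Complex.abs_natCast]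
      rw [h2]
      gcongr
      exact abs_ccast_sub_le (by omega) (by omega)
    have hTw : ‖T w‖ ≤ C2 / n := by
      apply norm_le_of _ _ (by positivity)
      intro k
      cases k with
      | zero =>
        rw [h0 w, hwk 0]
        have hφ0 : φ 0 = 0 := by rw [hφdef]; simp
        rw [hφ0, zero_mul, mul_zero, map_zero]
        positivity
      | succ k =>
        rw [hS w k, hwk, hwk]
        have h3 : a (k + 1) * e (k + 1) = -(b k * e k) := by
          linear_combination herec k
        have hkey : b k * (φ k * e k) + a (k + 1) * (φ (k + 1) * e (k + 1))
            = (φ k - φ (k + 1)) * (b k * e k) := by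
          calc b k * (φ k * e k) + a (k + 1) * (φ (k + 1) * e (k + 1))
              = φ k * (b k * e k) + φ (k + 1) * (a (k + 1) * e (k + 1)) := by ring
            _ = (φ k - φ (k + 1)) * (b k * e k) := by rw [h3]; ring
        rw [hkey, map_mul, map_mul]
        calc Complex.abs (φ k - φ (k + 1)) * (Complex.abs (b k) * Complex.abs (e k))
            ≤ (1 / n) * (Mb * K2) := by
              apply mul_le_mul (hφdiff k) ?_ (by positivity) (by positivity)
              exact mul_le_mul (hMb k) (hub k) (Complex.abs.nonneg _) (zero_le_one.trans hMb1)
          _ = C2 / n := by rw [hC2def]; ring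
    have hwn : K1 ≤ ‖w‖ := by
      have hφn : φ n = 1 := by
        rw [hφdef]
        simp only
        rw [show min n (2 * n - n) = n from by omega, div_self]
        exact Nat.cast_ne_zero.mpr (by omega)
      calc K1 ≤ Complex.abs (e n) := hlb n
        _ = Complex.abs (w n) := by rw [hwk, hφn, one_mul]
        _ ≤ ‖w‖ := abs_apply_le_norm w n
    calc c * K1 ≤ c * ‖w‖ := mul_le_mul_of_nonneg_left hwn hc.le
      _ ≤ ‖T w‖ := hbd w
      _ ≤ C2 / n := hTw
  obtain ⟨n0, hn0⟩ := exists_nat_gt (C2 / (c * K1))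
  have hcK1 : 0 < c * K1 := mul_pos hc hK1pos
  have h3 : C2 / (c * K1) < ((n0 + 1 : ℕ) : ℝ) := by push_cast; linarith
  have h4 : C2 < ((n0 + 1 : ℕ) : ℝ) * (c * K1) := (div_lt_iff₀ hcK1).mp h3
  have h5 : C2 / ((n0 + 1 : ℕ) : ℝ) < c * K1 := by
    rw [div_lt_iff₀ (by positivity)]
    linarith [h4]
  linarith [key (n0 + 1) (by omega), h5]

lemma lem_dense (hl : 0 < l) (hl' : 0 < l')
    (ha : ∀ k, a (k + l) = a k) (hb : ∀ k, b (k + l') = b k)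
    (hbne : ∀ k, b k ≠ 0)
    (h0 : ∀ x, T x 0 = a 0 * x 0)
    (hS : ∀ x k, T x (k + 1) = b k * x k + a (k + 1) * x (k + 1))
    (heq : (∏ j ∈ range l, Complex.abs (a j)) ^ l' = (∏ j ∈ range l', Complex.abs (b j)) ^ l) :
    DenseRange ⇑T := by
  set fa : ℕ → ℝ := fun k => Complex.abs (a k) with hfa
  set fb : ℕ → ℝ := fun k => Complex.abs (b k) with hfb
  have hfa0 : ∀ k, 0 ≤ fa k := fun k => Complex.abs.nonneg _
  have hfb0 : ∀ k, 0 ≤ fb k := fun k => Complex.abs.nonneg _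
  set L := l * l' with hLdef
  have hL : 0 < L := Nat.mul_pos hl hl'
  have hfal : ∀ k, fa (k + l) = fa k := fun k => by
    show Complex.abs (a (k + l)) = Complex.abs (a k); rw [ha k]
  have hfbl : ∀ k, fb (k + l') = fb k := fun k => by
    show Complex.abs (b (k + l')) = Complex.abs (b k); rw [hb k]
  have hfaper : ∀ k, fa (k + L) = fa k := fun k => by
    rw [hLdef, mul_comm l l']; exact per_mul hfal l' k
  have hfbper : ∀ k, fb (k + L) = fb k := fun k => by
    rw [hLdef]; exact per_mul hfbl l k
  set Qa : ℝ := (∏ j ∈ range l, fa j) ^ l' with hQadef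
  set Qb : ℝ := (∏ j ∈ range l', fb j) ^ l with hQbdef
  have hQa : ∏ j ∈ range L, fa j = Qa := by
    have h := per_block_pow (f := fa) hl hfal 0 l'
    simp only [zero_add] at h
    rw [hLdef, mul_comm l l']
    exact h
  have hQb : ∏ j ∈ range L, fb j = Qb := by
    have h := per_block_pow (f := fb) hl' hfbl 0 l
    simp only [zero_add] at h
    rw [hLdef]
    exact h
  have hQbpos : 0 < Qb := by
    apply pow_pos
    apply Finset.prod_pos
    intro j _
    exact AbsoluteValue.pos Complex.abs (hbne j)
  have hQapos : 0 < Qa := heq ▸ hQbpos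
  obtain ⟨Ma, hMa1, hMa⟩ := exists_ub fa hfa0 hL hfaper
  obtain ⟨Mb, hMb1, hMb⟩ := exists_ub fb hfb0 hL hfbper
  obtain ⟨mna, hmna0, hmna1, hmna⟩ := exists_lb fa hfa0 hL hfaper (hQa ▸ hQapos)
  have hane : ∀ k, a k ≠ 0 := by
    intro k hk
    have h1 := hmna k
    rw [hfa] at h1
    simp only [hk, map_zero] at h1
    linarith
  set K2 : ℝ := Mb ^ L / mna ^ L with hK2def
  have hK2pos : 0 < K2 :=
    div_pos (pow_pos (lt_of_lt_of_le one_pos hMb1) L) (pow_pos hmna0 L)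
  rw [Metric.denseRange_iff]
  intro w ε hε
  obtain ⟨z, hzball, hzD⟩ := Metric.dense_iff.mp dense_D w (ε / 2) (by linarith)
  obtain ⟨N, hN⟩ := hzD
  set x : ℕ → ℂ := fun n =>
    Nat.rec (motive := fun _ => ℂ) (z 0 / a 0)
      (fun k xk => (z (k + 1) - b k * xk) / a (k + 1)) n with hxdef
  have hx0 : a 0 * x 0 = z 0 := by
    show a 0 * (z 0 / a 0) = z 0
    field_simp [hane 0]
  have hxS : ∀ k, a (k + 1) * x (k + 1) = z (k + 1) - b k * x k := by
    intro k
    show a (k + 1) * ((z (k + 1) - b k * x k) / a (k + 1)) = _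
    field_simp [hane (k + 1)]
  have habsstep : ∀ j, Complex.abs (x (N + j + 1)) * fa (N + j + 1)
      = fb (N + j) * Complex.abs (x (N + j)) := by
    intro j
    have hz0 : z (N + j + 1) = 0 := hN _ (by omega)
    have h1 : a (N + j + 1) * x (N + j + 1) = -(b (N + j) * x (N + j)) := by
      have := hxS (N + j)
      rw [hz0] at this
      linear_combination this
    have h2 := congrArg Complex.abs h1
    rw [map_mul, map_neg_eq_map, map_mul] at h2
    calc Complex.abs (x (N + j + 1)) * fa (N + j + 1)
        = Complex.abs (a (N + j + 1)) * Complex.abs (x (N + j + 1)) := by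
          rw [mul_comm]
      _ = Complex.abs (b (N + j)) * Complex.abs (x (N + j)) := h2
      _ = fb (N + j) * Complex.abs (x (N + j)) := rfl
  have htail : ∀ j, Complex.abs (x (N + j)) * (∏ i ∈ range j, fa (N + 1 + i))
      = Complex.abs (x N) * ∏ i ∈ range j, fb (N + i) := by
    intro j
    induction j with
    | zero => simp
    | succ j ih =>
      rw [Finset.prod_range_succ, Finset.prod_range_succ]
      have e1 : N + 1 + j = N + j + 1 := by omega
      calc Complex.abs (x (N + (j + 1))) * ((∏ i ∈ range j, fa (N + 1 + i)) * fa (N + 1 + j))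
          = (Complex.abs (x (N + j + 1)) * fa (N + j + 1)) * ∏ i ∈ range j, fa (N + 1 + i) := by
            rw [e1, show N + (j + 1) = N + j + 1 from by omega]; ring
        _ = (fb (N + j) * Complex.abs (x (N + j))) * ∏ i ∈ range j, fa (N + 1 + i) := by
            rw [habsstep j]
        _ = (Complex.abs (x (N + j)) * ∏ i ∈ range j, fa (N + 1 + i)) * fb (N + j) := by ring
        _ = (Complex.abs (x N) * ∏ i ∈ range j, fb (N + i)) * fb (N + j) := by rw [ih]
        _ = Complex.abs (x N) * ((∏ i ∈ range j, fb (N + i)) * fb (N + j)) := by ring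
  have htailbd : ∀ j, Complex.abs (x (N + j)) ≤ Complex.abs (x N) * K2 := by
    intro j
    set u := j / L with hudef
    have hu1 : u * L ≤ j := Nat.div_mul_le_self j L
    have hu2 : j ≤ u * L + L := (by rw [hudef]; exact Nat.lt_div_mul_add hL : j < u * L + L).le
    have hnum : ∏ i ∈ range j, fb (N + i) ≤ Qb ^ u * Mb ^ L :=
      hQb ▸ per_window_up hL hfbper hfb0 hMb hMb1 N j u hu1 hu2
    have hden : Qa ^ u * mna ^ L ≤ ∏ i ∈ range j, fa (N + 1 + i) :=
      hQa ▸ per_window_lo hL hfaper hmna hmna0 hmna1 (N + 1) j u hu1 hu2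
    have hdenpos : (0:ℝ) < ∏ i ∈ range j, fa (N + 1 + i) :=
      Finset.prod_pos fun i _ => lt_of_lt_of_le hmna0 (hmna _)
    have h1 : Complex.abs (x (N + j))
        = (Complex.abs (x N) * ∏ i ∈ range j, fb (N + i)) / (∏ i ∈ range j, fa (N + 1 + i)) := by
      rw [← htail j, mul_div_assoc, div_self hdenpos.ne', mul_one]
    rw [h1]
    calc (Complex.abs (x N) * ∏ i ∈ range j, fb (N + i)) / (∏ i ∈ range j, fa (N + 1 + i))
        ≤ (Complex.abs (x N) * (Qb ^ u * Mb ^ L)) / (Qa ^ u * mna ^ L) := by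
          apply div_le_div₀
          · exact mul_nonneg (Complex.abs.nonneg _)
              (mul_nonneg (pow_nonneg hQbpos.le u) (pow_nonneg (zero_le_one.trans hMb1) L))
          · exact mul_le_mul_of_nonneg_left hnum (Complex.abs.nonneg _)
          · exact mul_pos (pow_pos hQapos u) (pow_pos hmna0 L)
          · exact hden
      _ = Complex.abs (x N) * K2 := by
          rw [heq, hK2def]
          rw [show Complex.abs (x N) * (Qb ^ u * Mb ^ L) = (Qb ^ u) * (Complex.abs (x N) * Mb ^ L) from by ring,
            show Qb ^ u * mna ^ L = Qb ^ u * mna ^ L from rfl,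
            mul_div_mul_left _ _ (pow_pos hQbpos u).ne']
          ring
  set X : ℝ := (∑ i ∈ range (N + 1), Complex.abs (x i)) + Complex.abs (x N) * K2 with hXdef
  have hX0 : 0 ≤ X := by
    apply add_nonneg
    · exact Finset.sum_nonneg fun i _ => Complex.abs.nonneg _
    · exact mul_nonneg (Complex.abs.nonneg _) hK2pos.le
  have hXbd : ∀ k, Complex.abs (x k) ≤ X := by
    intro k
    rcases le_or_gt k N with h | h
    · have h1 : Complex.abs (x k) ≤ ∑ i ∈ range (N + 1), Complex.abs (x i) :=
        Finset.single_le_sum (fun i _ => Complex.abs.nonneg _) (Finset.mem_range.mpr (by omega))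
      have h2 : 0 ≤ Complex.abs (x N) * K2 := mul_nonneg (Complex.abs.nonneg _) hK2pos.le
      rw [hXdef]; linarith
    · obtain ⟨j, rfl⟩ : ∃ j, k = N + j := ⟨k - N, by omega⟩
      have h1 := htailbd j
      have h2 : (0:ℝ) ≤ ∑ i ∈ range (N + 1), Complex.abs (x i) :=
        Finset.sum_nonneg fun i _ => Complex.abs.nonneg _
      rw [hXdef]; linarith
  obtain ⟨n0, hn0⟩ := exists_nat_gt (2 * (Mb * X) / ε)
  set Tn := n0 + 1 with hTndef
  have hTnR : (0:ℝ) < Tn := by rw [hTndef]; positivity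
  have hTn : Mb * X / Tn < ε / 2 := by
    rw [div_lt_iff₀ hTnR]
    have hMbX : 0 ≤ Mb * X := mul_nonneg (zero_le_one.trans hMb1) hX0
    have h1 : 2 * (Mb * X) / ε < Tn := by
      rw [hTndef]; push_cast; push_cast at hn0; linarith
    rw [div_lt_iff₀ hε] at h1
    nlinarith
  set ψ : ℕ → ℂ := fun k => ((min Tn (N + Tn - k) : ℕ) : ℂ) / Tn with hψdef
  have hψsupp : ∀ k, N + Tn ≤ k → ψ k * x k = 0 := by
    intro k hk
    have : min Tn (N + Tn - k) = 0 := by omega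
    rw [hψdef]
    simp only [this, Nat.cast_zero, zero_div, zero_mul]
  have hψ1 : ∀ k, k ≤ N → ψ k = 1 := by
    intro k hk
    rw [hψdef]
    simp only
    rw [show min Tn (N + Tn - k) = Tn from by omega, div_self]
    exact Nat.cast_ne_zero.mpr (by omega)
  have hψdiff : ∀ k, Complex.abs (ψ k - ψ (k + 1)) ≤ 1 / Tn := by
    intro k
    rw [hψdef]
    simp only
    rw [div_sub_div_same, map_div₀, Complex.abs_natCast]
    gcongr
    exact abs_ccast_sub_le (by omega) (by omega)
  set w' : ZeroAtInftyContinuousMap ℕ ℂ := fs (fun k => ψ k * x k) (N + Tn) hψsupp with hw'def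
  have hw'k : ∀ k, w' k = ψ k * x k := fun k => by rw [hw'def]; exact fs_apply _ _ _ k
  have hcoord : ∀ k, Complex.abs ((T w') k - z k) ≤ Mb * X / Tn := by
    intro k
    have hMbX : 0 ≤ Mb * X / Tn :=
      div_nonneg (mul_nonneg (zero_le_one.trans hMb1) hX0) hTnR.le
    cases k with
    | zero =>
      rw [h0 w', hw'k 0, hψ1 0 (by omega)]
      rw [show a 0 * (1 * x 0) = a 0 * x 0 from by ring, hx0, sub_self, map_zero]
      exact hMbX
    | succ k =>
      rw [hS w' k, hw'k, hw'k]
      have hsplit : b k * (ψ k * x k) + a (k + 1) * (ψ (k + 1) * x (k + 1)) - z (k + 1)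
          = (ψ k - ψ (k + 1)) * (b k * x k) + (ψ (k + 1) - 1) * z (k + 1) := by
        have h1 := hxS k
        calc b k * (ψ k * x k) + a (k + 1) * (ψ (k + 1) * x (k + 1)) - z (k + 1)
            = ψ k * (b k * x k) + ψ (k + 1) * (a (k + 1) * x (k + 1)) - z (k + 1) := by ring
          _ = ψ k * (b k * x k) + ψ (k + 1) * (z (k + 1) - b k * x k) - z (k + 1) := by rw [h1]
          _ = (ψ k - ψ (k + 1)) * (b k * x k) + (ψ (k + 1) - 1) * z (k + 1) := by ring
      rw [hsplit]
      have hterm2 : (ψ (k + 1) - 1) * z (k + 1) = 0 := by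
        rcases le_or_gt (k + 1) N with h | h
        · rw [hψ1 (k + 1) h, sub_self, zero_mul]
        · rw [hN (k + 1) (by omega), mul_zero]
      rw [hterm2, add_zero, map_mul, map_mul]
      calc Complex.abs (ψ k - ψ (k + 1)) * (Complex.abs (b k) * Complex.abs (x k))
          ≤ (1 / Tn) * (Mb * X) := by
            apply mul_le_mul (hψdiff k) ?_ (by positivity) (by positivity)
            exact mul_le_mul (hMb k) (hXbd k) (Complex.abs.nonneg _) (zero_le_one.trans hMb1)
        _ = Mb * X / Tn := by ring
  refine ⟨w', ?_⟩
  have hnorm : ‖T w' - z‖ ≤ Mb * X / Tn := by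
    apply norm_le_of _ _ (div_nonneg (mul_nonneg (zero_le_one.trans hMb1) hX0) hTnR.le)
    intro k
    rw [ZeroAtInftyContinuousMap.sub_apply]
    exact hcoord k
  have hd1 : dist w (T w') ≤ dist w z + dist z (T w') := dist_triangle w z (T w')
  have hd2 : dist z (T w') = ‖T w' - z‖ := by
    rw [dist_eq_norm, ← norm_neg]
    congr 1
    abel
  have hd3 : dist w z < ε / 2 := by
    rw [dist_comm]
    exact Metric.mem_ball.mp hzball
  calc dist w (T w') ≤ dist w z + dist z (T w') := hd1
    _ < ε / 2 + ε / 2 := by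
        apply add_lt_add hd3
        rw [hd2]
        exact lt_of_le_of_lt hnorm hTn
    _ = ε := by ring

end main

end Stmt9Aux

open Stmt9Aux Finset

open Fin.NatCast

/-- The continuous spectrum of `B` on `c₀` (those `λ` in the spectrum for which
`B - λI` is injective with dense range but does not have a bounded inverse) equals
`{λ : (|λ-r₁|⋯|λ-r_l|)^{1/l} = (|s₁|⋯|s_{l'}|)^{1/l'}}`. -/
theorem stmt_9 (l l' : ℕ) [NeZero l] [NeZero l'] (r : Fin l → ℂ) (s : Fin l' → ℂ)
    (hs : ∀ j, s j ≠ 0)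
    (B : ZeroAtInftyContinuousMap ℕ ℂ →L[ℂ] ZeroAtInftyContinuousMap ℕ ℂ)
    (hB0 : ∀ x : ZeroAtInftyContinuousMap ℕ ℂ, B x 0 = r 0 * x 0)
    (hB : ∀ (x : ZeroAtInftyContinuousMap ℕ ℂ) (k : ℕ),
      B x (k + 1) = s (Fin.ofNat l' k) * x k + r (Fin.ofNat l (k + 1)) * x (k + 1)) :
    {lam : ℂ | lam ∈ spectrum ℂ B ∧ Function.Injective ⇑(B - lam • 1) ∧
        DenseRange ⇑(B - lam • 1) ∧
        ¬ ∃ c > (0 : ℝ), ∀ x : ZeroAtInftyContinuousMap ℕ ℂ, c * ‖x‖ ≤ ‖(B - lam • 1) x‖} =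
      {lam : ℂ | (∏ i, ‖lam - r i‖) ^ ((1 : ℝ) / l) =
        (∏ j, ‖s j‖) ^ ((1 : ℝ) / l')} := by
  have hl : 0 < l := Nat.pos_of_ne_zero (NeZero.ne l)
  have hl' : 0 < l' := Nat.pos_of_ne_zero (NeZero.ne l')
  ext lam
  simp only [Set.mem_setOf_eq]
  set a : ℕ → ℂ := fun k => r (↑k) - lam with hadef
  set b : ℕ → ℂ := fun k => s (↑k) with hbdef
  have hbne : ∀ k, b k ≠ 0 := fun k => hs _
  have haper : ∀ k, a (k + l) = a k := by
    intro k
    show r (↑(k + l)) - lam = r (↑k) - lam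
    congr 2
    rw [Nat.cast_add, Fin.natCast_self, add_zero]
  have hbper' : ∀ k, b (k + l') = b k := by
    intro k
    show s (↑(k + l')) = s (↑k)
    congr 1
    rw [Nat.cast_add, Fin.natCast_self, add_zero]
  have heval0 : ∀ x : ZeroAtInftyContinuousMap ℕ ℂ, (B - lam • 1) x 0 = a 0 * x 0 := by
    intro x
    rw [ContinuousLinearMap.sub_apply, ContinuousLinearMap.smul_apply,
      ContinuousLinearMap.one_apply, ZeroAtInftyContinuousMap.sub_apply,
      ZeroAtInftyContinuousMap.smul_apply, hB0 x]
    show r 0 * x 0 - lam • x 0 = (r (↑(0:ℕ)) - lam) * x 0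
    rw [Nat.cast_zero, smul_eq_mul]
    ring
  have hevalS : ∀ (x : ZeroAtInftyContinuousMap ℕ ℂ) (k : ℕ),
      (B - lam • 1) x (k + 1) = b k * x k + a (k + 1) * x (k + 1) := by
    intro x k
    rw [ContinuousLinearMap.sub_apply, ContinuousLinearMap.smul_apply,
      ContinuousLinearMap.one_apply, ZeroAtInftyContinuousMap.sub_apply,
      ZeroAtInftyContinuousMap.smul_apply, hB x]
    show s ↑k * x k + r (↑(k+1)) * x (k+1) - lam • x (k+1)
      = s ↑k * x k + (r (↑(k+1)) - lam) * x (k + 1)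
    rw [smul_eq_mul]
    ring
  have hP : (∏ i, ‖lam - r i‖) = ∏ j ∈ range l, Complex.abs (a j) := by
    rw [← Fin.prod_univ_eq_prod_range (fun j => Complex.abs (a j)) l]
    apply Finset.prod_congr rfl
    intro i _
    show ‖lam - r i‖ = Complex.abs (r (↑(i : ℕ)) - lam)
    rw [Fin.cast_val_eq_self i, Complex.abs.map_sub, Complex.norm_eq_abs]
  have hQ : (∏ j, ‖s j‖) = ∏ j ∈ range l', Complex.abs (b j) := by
    rw [← Fin.prod_univ_eq_prod_range (fun j => Complex.abs (b j)) l']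
    apply Finset.prod_congr rfl
    intro i _
    show ‖s i‖ = Complex.abs (s (↑(i : ℕ)))
    rw [Fin.cast_val_eq_self i, Complex.norm_eq_abs]
  have hppos : (0:ℝ) ≤ ∏ j ∈ range l, Complex.abs (a j) :=
    Finset.prod_nonneg fun j _ => Complex.abs.nonneg _
  have hqpos : (0:ℝ) ≤ ∏ j ∈ range l', Complex.abs (b j) :=
    Finset.prod_nonneg fun j _ => Complex.abs.nonneg _
  rw [hP, hQ, cond_iff hl hl' hppos hqpos]
  constructor
  · rintro ⟨hspec, hinj, hdense, hnb⟩
    rcases lt_trichotomy ((∏ j ∈ range l, Complex.abs (a j)) ^ l')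
      ((∏ j ∈ range l', Complex.abs (b j)) ^ l) with h | h | h
    · exact absurd hdense (lem_notdense hl hl' haper hbper' hbne heval0 hevalS h)
    · exact h
    · exact absurd (lem_bddBelow hl hl' haper hbper' heval0 hevalS h) hnb
  · intro heq
    have hqQpos : (0:ℝ) < (∏ j ∈ range l', Complex.abs (b j)) ^ l := by
      apply pow_pos
      exact Finset.prod_pos fun j _ => AbsoluteValue.pos Complex.abs (hbne j)
    have hpQpos : (0:ℝ) < ∏ j ∈ range l, Complex.abs (a j) := by
      rcases hppos.lt_or_eq with h | h
      · exact h
      · exfalso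
        rw [← h] at heq
        rw [zero_pow hl'.ne'] at heq
        exact hqQpos.ne' heq.symm
    have hane : ∀ k, a k ≠ 0 := by
      intro k hk
      set i : Fin l := (↑k : Fin l) with hidef
      have h1 : a (i : ℕ) = a k := by
        show r (↑(i : ℕ)) - lam = r (↑k) - lam
        rw [Fin.cast_val_eq_self]
      have h2 : Complex.abs (a (i : ℕ)) = 0 := by rw [h1, hk, map_zero]
      have h3 : (i : ℕ) ∈ range l := Finset.mem_range.mpr i.isLt
      have h4 : ∏ j ∈ range l, Complex.abs (a j) = 0 := Finset.prod_eq_zero h3 h2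
      exact hpQpos.ne' h4
    have hnb := lem_notbdd hl hl' haper hbper' hbne heval0 hevalS heq
    exact ⟨lem_spec rfl hnb, lem_inj hane heval0 hevalS,
      lem_dense hl hl' haper hbper' hbne heval0 hevalS heq, hnb⟩
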